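/- Let x(u,v) = γ(u) + γ̃(v) be the translation surface of framed curves (γ, ν₁, ν₂) and (γ̃, ν̃₁, ν̃₂) with curvatures (ℓ, m, n, α) and (ℓ̃, m̃, ñ, α̃), and frame matrix T = (t_ij). Then for all (u,v) ∈ I × J: x_u·ν₁(u) = 0, x_u·ν₂(u) = 0, x_u·μ(u) = α(u), x_v·ν₁(u) = α̃(v)t₃₁(u,v), x_v·ν₂(u) = α̃(v)t₃₂(u,v), x_v·μ(u) = α̃(v)t₃₃(u,v), and x_u(u,v) × x_v(u,v) = −α(u)α̃(v)t₃₂(u,v)·ν₁(u) + α(u)α̃(v)t₃₁(u,v)·ν₂(u); in particular (x, ν₁, ν₂) is a generalised framed surface with A(u,v) = −α(u)α̃(v)t₃₂(u,v) and B(u,v) = α(u)α̃(v)t₃₁(u,v). -/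
import Mathlib


open Matrix Real

noncomputable section

abbrev V3 : Type := Fin 3 → ℝ

def cross3 (a b : V3) : V3 := crossProduct a b

def mu3 (nu1 nu2 : ℝ → V3) (t : ℝ) : V3 := cross3 (nu1 t) (nu2 t)

/-- A framed curve on a set `I`. -/
def IsFramedCurve (I : Set ℝ) (g nu1 nu2 : ℝ → V3) : Prop :=
  ContDiffOn ℝ (⊤ : ℕ∞) g I ∧ ContDiffOn ℝ (⊤ : ℕ∞) nu1 I ∧ ContDiffOn ℝ (⊤ : ℕ∞) nu2 I ∧
  ∀ t ∈ I, nu1 t ⬝ᵥ nu1 t = 1 ∧ nu2 t ⬝ᵥ nu2 t = 1 ∧ nu1 t ⬝ᵥ nu2 t = 0 ∧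
    deriv g t ⬝ᵥ nu1 t = 0 ∧ deriv g t ⬝ᵥ nu2 t = 0

def curvL (nu1 nu2 : ℝ → V3) (t : ℝ) : ℝ := deriv nu1 t ⬝ᵥ nu2 t
def curvM (nu1 nu2 : ℝ → V3) (t : ℝ) : ℝ := deriv nu1 t ⬝ᵥ mu3 nu1 nu2 t
def curvN (nu1 nu2 : ℝ → V3) (t : ℝ) : ℝ := deriv nu2 t ⬝ᵥ mu3 nu1 nu2 t
def curvA (g nu1 nu2 : ℝ → V3) (t : ℝ) : ℝ := deriv g t ⬝ᵥ mu3 nu1 nu2 t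

/-- Frame matrix of two framed curves. -/
def frameMatrix (nu1 nu2 w1 w2 : ℝ → V3) (u v : ℝ) : Matrix (Fin 3) (Fin 3) ℝ :=
  Matrix.of fun i j => ![w1 v, w2 v, mu3 w1 w2 v] i ⬝ᵥ ![nu1 u, nu2 u, mu3 nu1 nu2 u] j

def det3 (a b c : V3) : ℝ := Matrix.det (Matrix.of ![a, b, c])

def pduV (f : ℝ → ℝ → V3) (u v : ℝ) : V3 := deriv (fun u' => f u' v) u
def pdvV (f : ℝ → ℝ → V3) (u v : ℝ) : V3 := deriv (fun v' => f u v') v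
def pduS (f : ℝ → ℝ → ℝ) (u v : ℝ) : ℝ := deriv (fun u' => f u' v) u
def pdvS (f : ℝ → ℝ → ℝ) (u v : ℝ) : ℝ := deriv (fun v' => f u v') v

/-- `A`-equivalence of the germ of `f` at `p` with the germ of `g` at `0`. -/
def AEquivAt (f : ℝ × ℝ → V3) (p : ℝ × ℝ) (g : ℝ × ℝ → V3) : Prop :=
  ∃ (U : Set (ℝ × ℝ)) (W : Set V3) (φ φi : ℝ × ℝ → ℝ × ℝ) (Ψ Ψi : V3 → V3),
    IsOpen U ∧ p ∈ U ∧ IsOpen W ∧ f p ∈ W ∧ (∀ q ∈ U, f q ∈ W) ∧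
    IsOpen (φ '' U) ∧ IsOpen (Ψ '' W) ∧
    ContDiffOn ℝ (⊤ : ℕ∞) φ U ∧ ContDiffOn ℝ (⊤ : ℕ∞) φi (φ '' U) ∧
    (∀ q ∈ U, φi (φ q) = q) ∧ (∀ q ∈ φ '' U, φ (φi q) = q) ∧
    ContDiffOn ℝ (⊤ : ℕ∞) Ψ W ∧ ContDiffOn ℝ (⊤ : ℕ∞) Ψi (Ψ '' W) ∧
    (∀ y ∈ W, Ψi (Ψ y) = y) ∧ (∀ y ∈ Ψ '' W, Ψ (Ψi y) = y) ∧
    φ p = 0 ∧ Ψ (f p) = g 0 ∧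
    ∀ q ∈ U, Ψ (f q) = g (φ q)

def crossCapModel : ℝ × ℝ → V3 := fun p => ![p.1, p.1 * p.2, p.2 ^ 2]
def S1PlusModel : ℝ × ℝ → V3 := fun p => ![p.1, p.2 ^ 2, p.2 * (p.1 ^ 2 + p.2 ^ 2)]
def S1MinusModel : ℝ × ℝ → V3 := fun p => ![p.1, p.2 ^ 2, p.2 * (p.1 ^ 2 - p.2 ^ 2)]
def cuspidalEdgeModel : ℝ × ℝ → V3 := fun p => ![p.1, p.2 ^ 2, p.2 ^ 3]
def swallowtailModel : ℝ × ℝ → V3 :=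
  fun p => ![p.1, 4 * p.2 ^ 3 + 2 * p.1 * p.2, 3 * p.2 ^ 4 + p.1 * p.2 ^ 2]
def cuspidalCrossCapModel : ℝ × ℝ → V3 := fun p => ![p.1, p.2 ^ 2, p.1 * p.2 ^ 3]
def D4PlusModel : ℝ × ℝ → V3 :=
  fun p => ![p.1 * p.2, p.1 ^ 2 + 3 * p.2 ^ 2, p.1 ^ 2 * p.2 + p.2 ^ 3]
def D4MinusModel : ℝ × ℝ → V3 :=
  fun p => ![p.1 * p.2, p.1 ^ 2 - 3 * p.2 ^ 2, p.1 ^ 2 * p.2 - p.2 ^ 3]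

def HasCrossCapAt (f : ℝ × ℝ → V3) (p : ℝ × ℝ) : Prop := AEquivAt f p crossCapModel
def HasS1PlusAt (f : ℝ × ℝ → V3) (p : ℝ × ℝ) : Prop := AEquivAt f p S1PlusModel
def HasS1MinusAt (f : ℝ × ℝ → V3) (p : ℝ × ℝ) : Prop := AEquivAt f p S1MinusModel
def HasCuspidalEdgeAt (f : ℝ × ℝ → V3) (p : ℝ × ℝ) : Prop := AEquivAt f p cuspidalEdgeModel
def HasSwallowtailAt (f : ℝ × ℝ → V3) (p : ℝ × ℝ) : Prop := AEquivAt f p swallowtailModel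
def HasCuspidalCrossCapAt (f : ℝ × ℝ → V3) (p : ℝ × ℝ) : Prop := AEquivAt f p cuspidalCrossCapModel
def HasD4PlusAt (f : ℝ × ℝ → V3) (p : ℝ × ℝ) : Prop := AEquivAt f p D4PlusModel
def HasD4MinusAt (f : ℝ × ℝ → V3) (p : ℝ × ℝ) : Prop := AEquivAt f p D4MinusModel

/-- A non-degenerate space curve parametrized by arc length on `I`. -/
def IsUnitSpeedNondeg (I : Set ℝ) (g : ℝ → V3) : Prop :=
  ContDiffOn ℝ (⊤ : ℕ∞) g I ∧ (∀ s ∈ I, deriv g s ⬝ᵥ deriv g s = 1) ∧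
  ∀ s ∈ I, deriv (deriv g) s ≠ 0

def fcurv (g : ℝ → V3) (s : ℝ) : ℝ := Real.sqrt (deriv (deriv g) s ⬝ᵥ deriv (deriv g) s)
def fnor (g : ℝ → V3) (s : ℝ) : V3 := (fcurv g s)⁻¹ • deriv (deriv g) s
def fbin (g : ℝ → V3) (s : ℝ) : V3 := cross3 (deriv g s) (fnor g s)
def ftor (g : ℝ → V3) (s : ℝ) : ℝ :=
  det3 (deriv g s) (deriv (deriv g) s) (deriv (deriv (deriv g)) s) / (fcurv g s) ^ 2

/-- Generalised framed surface on `U ⊆ ℝ²`. -/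
def IsGeneralisedFramedSurface (U : Set (ℝ × ℝ)) (x N1 N2 : ℝ × ℝ → V3) : Prop :=
  ContDiffOn ℝ (⊤ : ℕ∞) x U ∧ ContDiffOn ℝ (⊤ : ℕ∞) N1 U ∧ ContDiffOn ℝ (⊤ : ℕ∞) N2 U ∧
  (∀ p ∈ U, N1 p ⬝ᵥ N1 p = 1 ∧ N2 p ⬝ᵥ N2 p = 1 ∧ N1 p ⬝ᵥ N2 p = 0) ∧
  ∃ A B : ℝ × ℝ → ℝ, ContDiffOn ℝ (⊤ : ℕ∞) A U ∧ ContDiffOn ℝ (⊤ : ℕ∞) B U ∧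
    ∀ p ∈ U, cross3 (deriv (fun u => x (u, p.2)) p.1) (deriv (fun v => x (p.1, v)) p.2)
      = A p • N1 p + B p • N2 p

/-- Framed surface on `U ⊆ ℝ²`. -/
def IsFramedSurface (U : Set (ℝ × ℝ)) (x nn ss : ℝ × ℝ → V3) : Prop :=
  ContDiffOn ℝ (⊤ : ℕ∞) x U ∧ ContDiffOn ℝ (⊤ : ℕ∞) nn U ∧ ContDiffOn ℝ (⊤ : ℕ∞) ss U ∧
  ∀ p ∈ U, nn p ⬝ᵥ nn p = 1 ∧ ss p ⬝ᵥ ss p = 1 ∧ nn p ⬝ᵥ ss p = 0 ∧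
    deriv (fun u => x (u, p.2)) p.1 ⬝ᵥ nn p = 0 ∧ deriv (fun v => x (p.1, v)) p.2 ⬝ᵥ nn p = 0

/-- The vector field `η = -α̃(v) ∂/∂u + α(u) t₃₃(u,v) ∂/∂v` applied to a map `f`. -/
def etaD (g nu1 nu2 gt w1 w2 : ℝ → V3) (f : ℝ → ℝ → V3) (u v : ℝ) : V3 :=
  (-(curvA gt w1 w2 v)) • pduV f u v
    + (curvA g nu1 nu2 u * frameMatrix nu1 nu2 w1 w2 u v 2 2) • pdvV f u v

/-- `φ = det(ξx, ηx, ηηx)` for the translation surface `x(u,v) = γ(u) + γ̃(v)`. -/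
def phiD (g nu1 nu2 gt w1 w2 : ℝ → V3) (u v : ℝ) : ℝ :=
  det3 (pduV (fun a b => g a + gt b) u v)
    (etaD g nu1 nu2 gt w1 w2 (fun a b => g a + gt b) u v)
    (etaD g nu1 nu2 gt w1 w2 (etaD g nu1 nu2 gt w1 w2 (fun a b => g a + gt b)) u v)

/-- `n(u,v) = sin θ(u,v) ν₁(u) + cos θ(u,v) ν₂(u)`. -/
def nvecD (nu1 nu2 : ℝ → V3) (θ : ℝ → ℝ → ℝ) (u v : ℝ) : V3 :=
  Real.sin (θ u v) • nu1 u + Real.cos (θ u v) • nu2 u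

/-- `t = n × μ`. -/
def tvecD (nu1 nu2 : ℝ → V3) (θ : ℝ → ℝ → ℝ) (u v : ℝ) : V3 :=
  cross3 (nvecD nu1 nu2 θ u v) (mu3 nu1 nu2 u)
section MyHelpers

private lemma my_tripleCross (u a b : V3) :
    cross3 u (cross3 a b) = (u ⬝ᵥ b) • a - (u ⬝ᵥ a) • b := by
  funext i
  fin_cases i <;>
    simp [cross3, cross_apply, dotProduct, Fin.sum_univ_three] <;> ring

private lemma my_cross_anticomm (a b : V3) : cross3 a b = -cross3 b a := by
  funext i
  fin_cases i <;> simp [cross3, cross_apply] <;> ring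

private lemma my_cross_dot_self_left (a b : V3) : cross3 a b ⬝ᵥ a = 0 := by
  simp [cross3, cross_apply, dotProduct, Fin.sum_univ_three]; ring

private lemma my_cross_dot_self_right (a b : V3) : cross3 a b ⬝ᵥ b = 0 := by
  simp [cross3, cross_apply, dotProduct, Fin.sum_univ_three]; ring

private lemma my_lagrange (a b : V3) :
    cross3 a b ⬝ᵥ cross3 a b = (a ⬝ᵥ a) * (b ⬝ᵥ b) - (a ⬝ᵥ b) ^ 2 := by
  simp [cross3, cross_apply, dotProduct, Fin.sum_univ_three]; ring

private lemma my_cyclic (u v w : V3) : cross3 u v ⬝ᵥ w = cross3 w u ⬝ᵥ v := by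
  simp [cross3, cross_apply, dotProduct, Fin.sum_univ_three]; ring

private lemma my_parallel {c x : V3} (h : cross3 c x = 0) (hc : c ⬝ᵥ c = 1) :
    x = (x ⬝ᵥ c) • c := by
  have h1 := my_tripleCross c c x
  rw [h, hc, one_smul, dotProduct_comm] at h1
  simp only [cross3, map_zero] at h1
  exact (sub_eq_zero.mp h1.symm).symm

private lemma my_frame_decomp {a b x : V3} (ha : a ⬝ᵥ a = 1) (hb : b ⬝ᵥ b = 1)
    (hab : a ⬝ᵥ b = 0) (h1 : x ⬝ᵥ a = 0) (h2 : x ⬝ᵥ b = 0) :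
    x = (x ⬝ᵥ cross3 a b) • cross3 a b := by
  have hcx : cross3 (cross3 a b) x = 0 := by
    rw [my_cross_anticomm, my_tripleCross, h1, h2]
    simp
  have hc : cross3 a b ⬝ᵥ cross3 a b = 1 := by
    rw [my_lagrange, ha, hb, hab]; ring
  exact my_parallel hcx hc

private lemma my_expand {a b : V3} (x : V3) (ha : a ⬝ᵥ a = 1) (hb : b ⬝ᵥ b = 1)
    (hab : a ⬝ᵥ b = 0) :
    x = (x ⬝ᵥ a) • a + (x ⬝ᵥ b) • b + (x ⬝ᵥ cross3 a b) • cross3 a b := by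
  set y := x - (x ⬝ᵥ a) • a - (x ⬝ᵥ b) • b with hy
  have hya : y ⬝ᵥ a = 0 := by
    simp only [hy, sub_dotProduct, smul_dotProduct, smul_eq_mul, ha,
      dotProduct_comm b a, hab]
    ring
  have hyb : y ⬝ᵥ b = 0 := by
    simp only [hy, sub_dotProduct, smul_dotProduct, smul_eq_mul, hb, hab]
    ring
  have hyc : y ⬝ᵥ cross3 a b = x ⬝ᵥ cross3 a b := by
    simp only [hy, sub_dotProduct, smul_dotProduct, smul_eq_mul,
      dotProduct_comm a (cross3 a b), dotProduct_comm b (cross3 a b),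
      my_cross_dot_self_left, my_cross_dot_self_right]
    ring
  have hd := my_frame_decomp ha hb hab hya hyb
  rw [hyc] at hd
  rw [hy] at hd
  linear_combination (norm := module) hd

private lemma my_crossc_dot1 {a b : V3} (w : V3) (ha : a ⬝ᵥ a = 1) (hab : a ⬝ᵥ b = 0) :
    cross3 (cross3 a b) w ⬝ᵥ a = -(w ⬝ᵥ b) := by
  rw [my_cyclic, my_tripleCross, sub_dotProduct, smul_dotProduct, smul_dotProduct, hab, ha,
    dotProduct_comm b w]
  simp

private lemma my_crossc_dot2 {a b : V3} (w : V3) (hb : b ⬝ᵥ b = 1) (hab : a ⬝ᵥ b = 0) :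
    cross3 (cross3 a b) w ⬝ᵥ b = w ⬝ᵥ a := by
  rw [my_cyclic, my_tripleCross, sub_dotProduct, smul_dotProduct, smul_dotProduct, hb,
    dotProduct_comm b a, hab, dotProduct_comm a w]
  simp

private lemma my_cross_smul_left (r : ℝ) (a b : V3) :
    cross3 (r • a) b = r • cross3 a b := by
  funext i
  fin_cases i <;> simp [cross3, cross_apply] <;> ring

private lemma my_cross_smul_right (r : ℝ) (a b : V3) :
    cross3 a (r • b) = r • cross3 a b := by
  funext i
  fin_cases i <;> simp [cross3, cross_apply] <;> ring

private lemma my_cdo_apply {E : Type*} [NormedAddCommGroup E] [NormedSpace ℝ E]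
    {s : Set E} {f : E → V3} (hf : ContDiffOn ℝ (⊤ : ℕ∞) f s) (i : Fin 3) :
    ContDiffOn ℝ (⊤ : ℕ∞) (fun t => f t i) s :=
  (ContinuousLinearMap.proj (R := ℝ) (φ := fun _ : Fin 3 => ℝ) i).contDiff.comp_contDiffOn hf

private lemma my_cdo_dot {E : Type*} [NormedAddCommGroup E] [NormedSpace ℝ E]
    {s : Set E} {f g : E → V3} (hf : ContDiffOn ℝ (⊤ : ℕ∞) f s)
    (hg : ContDiffOn ℝ (⊤ : ℕ∞) g s) :
    ContDiffOn ℝ (⊤ : ℕ∞) (fun t => f t ⬝ᵥ g t) s := by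
  simp only [dotProduct, Fin.sum_univ_three]
  exact (((my_cdo_apply hf 0).mul (my_cdo_apply hg 0)).add
    ((my_cdo_apply hf 1).mul (my_cdo_apply hg 1))).add
    ((my_cdo_apply hf 2).mul (my_cdo_apply hg 2))

private lemma my_cdo_cross {E : Type*} [NormedAddCommGroup E] [NormedSpace ℝ E]
    {s : Set E} {f g : E → V3} (hf : ContDiffOn ℝ (⊤ : ℕ∞) f s)
    (hg : ContDiffOn ℝ (⊤ : ℕ∞) g s) :
    ContDiffOn ℝ (⊤ : ℕ∞) (fun t => cross3 (f t) (g t)) s := by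
  refine contDiffOn_pi.2 fun i => ?_
  fin_cases i
  · exact (((my_cdo_apply hf 1).mul (my_cdo_apply hg 2)).sub
      ((my_cdo_apply hf 2).mul (my_cdo_apply hg 1))).congr
      fun t _ => by simp [cross3, cross_apply]
  · exact (((my_cdo_apply hf 2).mul (my_cdo_apply hg 0)).sub
      ((my_cdo_apply hf 0).mul (my_cdo_apply hg 2))).congr
      fun t _ => by simp [cross3, cross_apply]
  · exact (((my_cdo_apply hf 0).mul (my_cdo_apply hg 1)).sub
      ((my_cdo_apply hf 1).mul (my_cdo_apply hg 0))).congr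
      fun t _ => by simp [cross3, cross_apply]

end MyHelpers

/-- basic invariants of the translation surface as a generalised framed surface. -/
theorem translationSurface_generalisedFramedSurface
    (I J : Set ℝ) (hI : IsOpen I) (hIc : I.OrdConnected)
    (hJ : IsOpen J) (hJc : J.OrdConnected)
    (g nu1 nu2 gt w1 w2 : ℝ → V3)
    (hg : IsFramedCurve I g nu1 nu2) (hgt : IsFramedCurve J gt w1 w2) :
    (∀ u ∈ I, ∀ v ∈ J,
      pduV (fun a b => g a + gt b) u v ⬝ᵥ nu1 u = 0 ∧
      pduV (fun a b => g a + gt b) u v ⬝ᵥ nu2 u = 0 ∧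
      pduV (fun a b => g a + gt b) u v ⬝ᵥ mu3 nu1 nu2 u = curvA g nu1 nu2 u ∧
      pdvV (fun a b => g a + gt b) u v ⬝ᵥ nu1 u
        = curvA gt w1 w2 v * frameMatrix nu1 nu2 w1 w2 u v 2 0 ∧
      pdvV (fun a b => g a + gt b) u v ⬝ᵥ nu2 u
        = curvA gt w1 w2 v * frameMatrix nu1 nu2 w1 w2 u v 2 1 ∧
      pdvV (fun a b => g a + gt b) u v ⬝ᵥ mu3 nu1 nu2 u
        = curvA gt w1 w2 v * frameMatrix nu1 nu2 w1 w2 u v 2 2 ∧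
      cross3 (pduV (fun a b => g a + gt b) u v) (pdvV (fun a b => g a + gt b) u v)
        = (-(curvA g nu1 nu2 u * curvA gt w1 w2 v * frameMatrix nu1 nu2 w1 w2 u v 2 1)) • nu1 u
            + (curvA g nu1 nu2 u * curvA gt w1 w2 v * frameMatrix nu1 nu2 w1 w2 u v 2 0) • nu2 u) ∧
    IsGeneralisedFramedSurface (I ×ˢ J) (fun p => g p.1 + gt p.2)
      (fun p => nu1 p.1) (fun p => nu2 p.1) := by
  obtain ⟨hg1, hgn1, hgn2, hgP⟩ := hg
  obtain ⟨ht1, htn1, htn2, htP⟩ := hgt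
  have hpdu : ∀ u v : ℝ, pduV (fun a b => g a + gt b) u v = deriv g u := by
    intro u v
    simp only [pduV]
    exact deriv_add_const (gt v)
  have hpdv : ∀ u v : ℝ, pdvV (fun a b => g a + gt b) u v = deriv gt v := by
    intro u v
    simp only [pdvV]
    exact deriv_const_add (g u)
  have hfme : ∀ (j : Fin 3) (u v : ℝ), frameMatrix nu1 nu2 w1 w2 u v 2 j
      = mu3 w1 w2 v ⬝ᵥ ![nu1 u, nu2 u, mu3 nu1 nu2 u] j := by
    intro j u v
    simp [frameMatrix]
  have key : ∀ u ∈ I, ∀ v ∈ J,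
      pduV (fun a b => g a + gt b) u v ⬝ᵥ nu1 u = 0 ∧
      pduV (fun a b => g a + gt b) u v ⬝ᵥ nu2 u = 0 ∧
      pduV (fun a b => g a + gt b) u v ⬝ᵥ mu3 nu1 nu2 u = curvA g nu1 nu2 u ∧
      pdvV (fun a b => g a + gt b) u v ⬝ᵥ nu1 u
        = curvA gt w1 w2 v * frameMatrix nu1 nu2 w1 w2 u v 2 0 ∧
      pdvV (fun a b => g a + gt b) u v ⬝ᵥ nu2 u
        = curvA gt w1 w2 v * frameMatrix nu1 nu2 w1 w2 u v 2 1 ∧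
      pdvV (fun a b => g a + gt b) u v ⬝ᵥ mu3 nu1 nu2 u
        = curvA gt w1 w2 v * frameMatrix nu1 nu2 w1 w2 u v 2 2 ∧
      cross3 (pduV (fun a b => g a + gt b) u v) (pdvV (fun a b => g a + gt b) u v)
        = (-(curvA g nu1 nu2 u * curvA gt w1 w2 v * frameMatrix nu1 nu2 w1 w2 u v 2 1)) • nu1 u
            + (curvA g nu1 nu2 u * curvA gt w1 w2 v * frameMatrix nu1 nu2 w1 w2 u v 2 0)
              • nu2 u := by
    intro u hu v hv
    obtain ⟨h1, h2, h3, h4, h5⟩ := hgP u hu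
    obtain ⟨k1, k2, k3, k4, k5⟩ := htP v hv
    have hdg : deriv g u = curvA g nu1 nu2 u • mu3 nu1 nu2 u := my_frame_decomp h1 h2 h3 h4 h5
    have hdgt : deriv gt v = curvA gt w1 w2 v • mu3 w1 w2 v := my_frame_decomp k1 k2 k3 k4 k5
    have e0 : frameMatrix nu1 nu2 w1 w2 u v 2 0 = mu3 w1 w2 v ⬝ᵥ nu1 u := by
      rw [hfme]; simp
    have e1 : frameMatrix nu1 nu2 w1 w2 u v 2 1 = mu3 w1 w2 v ⬝ᵥ nu2 u := by
      rw [hfme]; simp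
    have e2 : frameMatrix nu1 nu2 w1 w2 u v 2 2 = mu3 w1 w2 v ⬝ᵥ mu3 nu1 nu2 u := by
      rw [hfme]; simp
    refine ⟨?_, ?_, ?_, ?_, ?_, ?_, ?_⟩
    · rw [hpdu]; exact h4
    · rw [hpdu]; exact h5
    · rw [hpdu]; rfl
    · rw [hpdv, e0, hdgt, smul_dotProduct, smul_eq_mul]
    · rw [hpdv, e1, hdgt, smul_dotProduct, smul_eq_mul]
    · rw [hpdv, e2, hdgt, smul_dotProduct, smul_eq_mul]
    · rw [hpdu, hpdv, hdg, hdgt, my_cross_smul_left, my_cross_smul_right, e0, e1]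
      simp only [mu3]
      have hx := my_expand (cross3 (cross3 (nu1 u) (nu2 u)) (cross3 (w1 v) (w2 v))) h1 h2 h3
      rw [my_crossc_dot1 (cross3 (w1 v) (w2 v)) h1 h3,
        my_crossc_dot2 (cross3 (w1 v) (w2 v)) h2 h3,
        my_cross_dot_self_left (cross3 (nu1 u) (nu2 u)) (cross3 (w1 v) (w2 v))] at hx
      rw [hx]
      module
  refine ⟨key, ?_⟩
  have hmfst : ∀ p : ℝ × ℝ, p ∈ I ×ˢ J → p.1 ∈ I := fun p hp => hp.1
  have hmsnd : ∀ p : ℝ × ℝ, p ∈ I ×ˢ J → p.2 ∈ J := fun p hp => hp.2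
  refine ⟨(hg1.comp contDiff_fst.contDiffOn hmfst).add (ht1.comp contDiff_snd.contDiffOn hmsnd),
    hgn1.comp contDiff_fst.contDiffOn hmfst, hgn2.comp contDiff_fst.contDiffOn hmfst, ?_, ?_⟩
  · intro p hp
    obtain ⟨h1, h2, h3, _, _⟩ := hgP p.1 hp.1
    exact ⟨h1, h2, h3⟩
  · have hca : ContDiffOn ℝ (⊤ : ℕ∞) (curvA g nu1 nu2) I :=
      my_cdo_dot (hg1.deriv_of_isOpen hI (by exact_mod_cast le_top)) (my_cdo_cross hgn1 hgn2)
    have hcat : ContDiffOn ℝ (⊤ : ℕ∞) (curvA gt w1 w2) J :=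
      my_cdo_dot (ht1.deriv_of_isOpen hJ (by exact_mod_cast le_top)) (my_cdo_cross htn1 htn2)
    have hmut : ContDiffOn ℝ (⊤ : ℕ∞) (fun p : ℝ × ℝ => mu3 w1 w2 p.2) (I ×ˢ J) :=
      (my_cdo_cross htn1 htn2).comp contDiff_snd.contDiffOn hmsnd
    have hfm1 : ContDiffOn ℝ (⊤ : ℕ∞)
        (fun p : ℝ × ℝ => frameMatrix nu1 nu2 w1 w2 p.1 p.2 2 1) (I ×ˢ J) := by
      have : (fun p : ℝ × ℝ => frameMatrix nu1 nu2 w1 w2 p.1 p.2 2 1)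
          = fun p : ℝ × ℝ => mu3 w1 w2 p.2 ⬝ᵥ nu2 p.1 := by
        funext p
        rw [hfme]
        simp
      rw [this]
      exact my_cdo_dot hmut (hgn2.comp contDiff_fst.contDiffOn hmfst)
    have hfm0 : ContDiffOn ℝ (⊤ : ℕ∞)
        (fun p : ℝ × ℝ => frameMatrix nu1 nu2 w1 w2 p.1 p.2 2 0) (I ×ˢ J) := by
      have : (fun p : ℝ × ℝ => frameMatrix nu1 nu2 w1 w2 p.1 p.2 2 0)
          = fun p : ℝ × ℝ => mu3 w1 w2 p.2 ⬝ᵥ nu1 p.1 := by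
        funext p
        rw [hfme]
        simp
      rw [this]
      exact my_cdo_dot hmut (hgn1.comp contDiff_fst.contDiffOn hmfst)
    have hprod : ContDiffOn ℝ (⊤ : ℕ∞)
        (fun p : ℝ × ℝ => curvA g nu1 nu2 p.1 * curvA gt w1 w2 p.2) (I ×ˢ J) :=
      (hca.comp contDiff_fst.contDiffOn hmfst).mul (hcat.comp contDiff_snd.contDiffOn hmsnd)
    refine ⟨fun p => -(curvA g nu1 nu2 p.1 * curvA gt w1 w2 p.2
        * frameMatrix nu1 nu2 w1 w2 p.1 p.2 2 1),
      fun p => curvA g nu1 nu2 p.1 * curvA gt w1 w2 p.2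
        * frameMatrix nu1 nu2 w1 w2 p.1 p.2 2 0,
      (hprod.mul hfm1).neg, hprod.mul hfm0, ?_⟩
    intro p hp
    have h7 := (key p.1 hp.1 p.2 hp.2).2.2.2.2.2.2
    simpa only [pduV, pdvV, neg_mul] using h7


end
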